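/- If U is a set with relations z, r, e ⊆ U × U satisfying r∘e = r = e∘r, r∘r = r, z∘r = z = r∘z, r ∩ e = z, and z, r, e pairwise distinct, then for every natural number n there exist elements y, x_0, x_1, ..., x_n of U such that (x_i, x_j) ∈ r ∩ zᶜ whenever 0 ≤ i < j ≤ n, and (x_i, y) ∈ r ∩ zᶜ for all 0 ≤ i ≤ n. -/

import Mathlib

def rcomp {U : Type*} (a b : Set (U × U)) : Set (U × U) :=
  {p | ∃ w, (p.1, w) ∈ a ∧ (w, p.2) ∈ b}

theorem stmt3 {U : Type*} (z r e : Set (U × U))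
    (h1 : rcomp r e = r) (h2 : rcomp e r = r) (h3 : rcomp r r = r)
    (h4 : rcomp z r = z) (h5 : rcomp r z = z) (h6 : r ∩ e = z)
    (hzr : z ≠ r) (hze : z ≠ e) (hre : r ≠ e) :
    ∀ n : ℕ, ∃ (y : U) (x : Fin (n + 1) → U),
      (∀ i j : Fin (n + 1), i < j → (x i, x j) ∈ r ∩ zᶜ) ∧
      (∀ i : Fin (n + 1), (x i, y) ∈ r ∩ zᶜ) := by
  have htrans : ∀ {x y w : U}, (x, y) ∈ r → (y, w) ∈ r → (x, w) ∈ r := by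
    intro x y w hx hy; rw [← h3]; exact ⟨y, hx, hy⟩
  have hzr' : ∀ {x y w : U}, (x, y) ∈ z → (y, w) ∈ r → (x, w) ∈ z := by
    intro x y w hx hy; rw [← h4]; exact ⟨y, hx, hy⟩
  have hrz' : ∀ {x y w : U}, (x, y) ∈ r → (y, w) ∈ z → (x, w) ∈ z := by
    intro x y w hx hy; rw [← h5]; exact ⟨y, hx, hy⟩
  have hdense : ∀ {x y : U}, (x, y) ∈ r → ∃ c, (x, c) ∈ r ∧ (c, y) ∈ r := by
    intro x y hx; rw [← h3] at hx; exact hx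
  have hzsub : z ⊆ r := by rw [← h6]; exact Set.inter_subset_left
  have hex : ∃ p : U × U, p ∈ r ∧ p ∉ z := by
    by_contra h
    push_neg at h
    exact hzr (Set.Subset.antisymm hzsub (fun p hp => h p hp))
  obtain ⟨⟨a0, b0⟩, hab, habz⟩ := hex
  have chain : ∀ n : ℕ, ∃ a : ℕ → U,
      (∀ k, k ≤ n → (a k, a (k + 1)) ∈ r) ∧ (a 0, a (n + 1)) ∉ z := by
    intro n
    induction n with
    | zero =>
      refine ⟨fun k => if k = 0 then a0 else b0, ?_, by simpa using habz⟩
      intro k hk; interval_cases k; simpa using hab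
    | succ m ih =>
      obtain ⟨a, hcons, hnz⟩ := ih
      obtain ⟨c, hc1, hc2⟩ := hdense (hcons 0 (Nat.zero_le _))
      refine ⟨fun k => if k = 0 then a 0 else if k = 1 then c else a (k - 1), ?_, ?_⟩
      · intro k hk
        match k with
        | 0 => simpa using hc1
        | 1 => simpa using hc2
        | (j + 2) =>
          simp only [show j + 2 ≠ 0 by omega, show j + 2 ≠ 1 by omega,
            show j + 2 + 1 ≠ 0 by omega, show j + 2 + 1 ≠ 1 by omega, if_false]
          have := hcons (j + 1) (by omega)
          convert this using 3 <;> omega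
      · simp only [show m + 1 + 1 ≠ 0 by omega, show m + 1 + 1 ≠ 1 by omega, if_false,
          if_pos rfl]
        convert hnz using 3 <;> simp
  intro n
  obtain ⟨a, hcons, hnz⟩ := chain n
  have hseg : ∀ d i, i + d + 1 ≤ n + 1 → (a i, a (i + d + 1)) ∈ r := by
    intro d
    induction d with
    | zero => intro i hi; simpa using hcons i (by omega)
    | succ m ih =>
      intro i hi
      have h1 := ih i (by omega)
      have h2 := hcons (i + m + 1) (by omega)
      have := htrans h1 h2
      convert this using 3 <;> omega
  have hir : ∀ i j, i < j → j ≤ n + 1 → (a i, a j) ∈ r := by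
    intro i j hij hj
    have := hseg (j - i - 1) i (by omega)
    rwa [show i + (j - i - 1) + 1 = j by omega] at this
  have hinz : ∀ i j, i < j → j ≤ n + 1 → (a i, a j) ∉ z := by
    intro i j hij hj hz
    apply hnz
    have h0j : (a 0, a j) ∈ z := by
      rcases Nat.eq_zero_or_pos i with h | h
      · subst h; exact hz
      · exact hrz' (hir 0 i h (by omega)) hz
    rcases Nat.lt_or_ge j (n + 1) with h | h
    · exact hzr' h0j (hir j (n + 1) h le_rfl)
    · rwa [show j = n + 1 by omega] at h0j
  refine ⟨a (n + 1), fun i => a i.1, ?_, ?_⟩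
  · intro i j hij
    have hj := j.isLt
    exact ⟨hir i.1 j.1 hij (by omega), hinz i.1 j.1 hij (by omega)⟩
  · intro i
    have hi := i.isLt
    exact ⟨hir i.1 (n + 1) (by omega) le_rfl, hinz i.1 (n + 1) (by omega) le_rfl⟩
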